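/- arXiv:1209.4970 — 2 statements merged into one kernel-verified Lean document; each statement's English description precedes it below -/
import Mathlib

section
/- Let ω > 0, ε ≥ 0, let ū : I → ℝ be continuous, and let x : I → (−2, −1) be a differentiable solution of x' = x/(1 − x²) − (ε/(1 − x²))·ū(s) (the van der Pol dynamics on the left branch of the critical manifold in the relaxation limit). Define Θ(x) = ω·∫_{−2}^x (1 − ξ²)/ξ dξ. Then the phase θ(s) = Θ(x(s)) satisfies θ' = ω + ε·(−ω/x(s))·ū(s); i.e., the infinitesimal phase response curve of the relaxation van der Pol oscillator is Z_R(θ) = −ω/x with x = Θ⁻¹(θ). -/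
open Real Set intervalIntegral

/-- Theorem (iPRC of the van der Pol oscillator in the relaxation limit):
along any solution of `x' = x/(1 − x²) − (ε/(1 − x²))ū(s)` staying in
`(−2, −1)`, the phase `θ(s) = Θ(x(s))` with
`Θ(x) = ω ∫_{−2}^x (1 − ξ²)/ξ dξ` satisfies
`θ' = ω + ε(−ω/x(s))ū(s)`; i.e. the infinitesimal phase response curve is
`Z_R(θ) = −ω/x` with `x = Θ⁻¹(θ)`. -/
theorem relaxation_vdp_iPRC
    (ω : ℝ) (hω : 0 < ω) (ε : ℝ) (hε : 0 ≤ ε)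
    (I : Set ℝ) (u : ℝ → ℝ) (hu : ContinuousOn u I)
    (x : ℝ → ℝ) (hx : ∀ s ∈ I, x s ∈ Ioo (-2 : ℝ) (-1))
    (hode : ∀ s ∈ I,
      HasDerivAt x (x s / (1 - (x s) ^ 2) - ε / (1 - (x s) ^ 2) * u s) s) :
    ∀ s ∈ I,
      HasDerivAt (fun τ => ω * ∫ ξ in (-2 : ℝ)..(x τ), (1 - ξ ^ 2) / ξ)
        (ω + ε * (-ω / x s) * u s) s := by
  intro s hs
  obtain ⟨h1, h2⟩ := hx s hs
  have hxne : x s ≠ 0 := by nlinarith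
  have hsq : 1 - (x s) ^ 2 ≠ 0 := by nlinarith
  set f : ℝ → ℝ := fun ξ => (1 - ξ ^ 2) / ξ with hf
  have hcontOn : ContinuousOn f {ξ : ℝ | ξ ≠ 0} := by
    apply ContinuousOn.div
    · fun_prop
    · fun_prop
    · intro ξ hξ; exact hξ
  have hInt : IntervalIntegrable f MeasureTheory.volume (-2) (x s) := by
    apply ContinuousOn.intervalIntegrable
    apply hcontOn.mono
    intro ξ hξ
    rw [uIcc_of_le (by linarith)] at hξ
    have := hξ.2
    simp only [mem_setOf_eq]
    intro h; rw [h] at this; linarith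
  have hca : ContinuousAt f (x s) := by
    have : {ξ : ℝ | ξ ≠ 0} ∈ nhds (x s) :=
      (isOpen_ne.mem_nhds (by simpa using hxne))
    exact hcontOn.continuousAt this
  have hmeas : StronglyMeasurableAtFilter f (nhds (x s)) MeasureTheory.volume := by
    refine ⟨univ, Filter.univ_mem, ?_⟩
    apply Measurable.aestronglyMeasurable
    measurability
  have hF : HasDerivAt (fun y => ∫ ξ in (-2 : ℝ)..y, f ξ) (f (x s)) (x s) :=
    intervalIntegral.integral_hasDerivAt_right hInt
      (hmeas) hca
  have hcomp := (hF.comp s (hode s hs)).const_mul ω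
  convert hcomp using 1
  show ω + ε * (-ω / x s) * u s = ω * ((1 - x s ^ 2) / x s * (x s / (1 - x s ^ 2) - ε / (1 - x s ^ 2) * u s))
  field_simp
  ring
  all_goals rfl
end

section
/- Let Z : [0,2π] → ℝ be continuous, let K > 0 and ω > 0, and consider the set D = {J > 0 : ω + K·Z(θ)·J > 0 for all θ ∈ [0,2π]}. Then the function G : D → ℝ defined by G(J) = ∫₀^{2π} J/(ω + K·Z(θ)·J) dθ is strictly increasing on (each connected component of) D containing 0 in its closure; consequently, the normalization equation G(J) = 1, which characterizes the stationary flux of the continuum of impulsively coupled oscillators, has at most one solution J* in that component. -/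
open Real Set intervalIntegral

/-- The set `D` of admissible constant fluxes: `J > 0` such that the velocity
`ω + K Z(θ) J` is positive for all `θ ∈ [0,2π]`. (This set is an interval
having `0` in its closure, i.e. the connected component of admissible fluxes
adjacent to `0`.) -/
def fluxDomain (Z : ℝ → ℝ) (K ω : ℝ) : Set ℝ :=
  {J : ℝ | 0 < J ∧ ∀ θ ∈ Icc (0 : ℝ) (2 * π), 0 < ω + K * Z θ * J}

/-- The normalization integral `G(J) = ∫₀^{2π} J/(ω + K Z(θ) J) dθ` of the
stationary density `ρ*(θ) = J/(ω + K Z(θ) J)`. -/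
noncomputable def normIntegral (Z : ℝ → ℝ) (K ω J : ℝ) : ℝ :=
  ∫ θ in (0 : ℝ)..(2 * π), J / (ω + K * Z θ * J)

/-- Theorem (uniqueness of the stationary flux for the continuum of
impulsively coupled oscillators): `G` is strictly increasing on the admissible
flux domain, hence the normalization equation `G(J) = 1` characterizing the
stationary flux has at most one solution `J*` there. -/
theorem stationary_flux_unique
    (Z : ℝ → ℝ) (hZ : ContinuousOn Z (Icc 0 (2 * π)))
    (K ω : ℝ) (hK : 0 < K) (hω : 0 < ω) :
    StrictMonoOn (fun J => normIntegral Z K ω J) (fluxDomain Z K ω) ∧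
    ∀ J₁ ∈ fluxDomain Z K ω, ∀ J₂ ∈ fluxDomain Z K ω,
      normIntegral Z K ω J₁ = 1 → normIntegral Z K ω J₂ = 1 → J₁ = J₂ := by
  have hab : (0 : ℝ) < 2 * π := by positivity
  have hmono : StrictMonoOn (fun J => normIntegral Z K ω J) (fluxDomain Z K ω) := by
    intro J₁ h₁ J₂ h₂ h12
    obtain ⟨hJ₁, hv₁⟩ := h₁
    obtain ⟨hJ₂, hv₂⟩ := h₂
    have hcont : ∀ J : ℝ, (∀ θ ∈ Icc (0:ℝ) (2*π), 0 < ω + K * Z θ * J) →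
        ContinuousOn (fun θ => J / (ω + K * Z θ * J)) (Icc 0 (2*π)) := by
      intro J hv
      exact continuousOn_const.div
        (by fun_prop)
        (fun θ hθ => (hv θ hθ).ne')
    have hlt : ∀ θ ∈ Icc (0:ℝ) (2*π),
        J₁ / (ω + K * Z θ * J₁) < J₂ / (ω + K * Z θ * J₂) := by
      intro θ hθ
      have h1 := hv₁ θ hθ
      have h2 := hv₂ θ hθ
      rw [div_lt_div_iff₀ h1 h2]
      nlinarith
    simp only [normIntegral]
    exact integral_lt_integral_of_continuousOn_of_le_of_exists_lt hab
      (hcont J₁ hv₁) (hcont J₂ hv₂)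
      (fun θ hθ => (hlt θ (Ioc_subset_Icc_self hθ)).le)
      ⟨0, left_mem_Icc.2 hab.le, hlt 0 (left_mem_Icc.2 hab.le)⟩
  refine ⟨hmono, fun J₁ h₁ J₂ h₂ e₁ e₂ => hmono.injOn h₁ h₂ ?_⟩
  simp [e₁, e₂]
end
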